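/- Let H be an infinite-dimensional complex Hilbert space and let f : H → H be a bounded linear operator of finite rank. Then f is a product of finitely many idempotent bounded linear operators of finite rank on H; that is, the semigroup of finite-rank operators on H is idempotent-generated. -/

import Mathlib

set_option maxHeartbeats 1000000

open Submodule Module

/-- In an infinite-dimensional space, for every finite-dimensional subspace `A`
and every `n`, there is a subspace of dimension `n` disjoint from `A`. -/
lemma aux_exists_disjoint_subspace {V : Type*} [AddCommGroup V] [Module ℂ V]
    (hV : ¬ FiniteDimensional ℂ V) (A : Submodule ℂ V) (hA : FiniteDimensional ℂ A) :
    ∀ n : ℕ, ∃ W : Submodule ℂ V, Disjoint W A ∧ FiniteDimensional ℂ W ∧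
      Module.finrank ℂ W = n := by
  intro n
  induction n with
  | zero => exact ⟨⊥, disjoint_bot_left, inferInstance, finrank_bot ℂ V⟩
  | succ n ih =>
    obtain ⟨W, hWA, hWfin, hWrank⟩ := ih
    haveI := hA; haveI := hWfin
    haveI : FiniteDimensional ℂ (A ⊔ W : Submodule ℂ V) := inferInstance
    have hne : (A ⊔ W : Submodule ℂ V) ≠ ⊤ := by
      intro htop
      apply hV
      have : FiniteDimensional ℂ (⊤ : Submodule ℂ V) := htop ▸ inferInstance
      exact (Submodule.topEquiv (R := ℂ) (M := V)).finiteDimensional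
    obtain ⟨v, hv⟩ : ∃ v, v ∉ (A ⊔ W : Submodule ℂ V) := by
      by_contra h
      push_neg at h
      exact hne (Submodule.eq_top_iff'.2 h)
    have hv0 : v ≠ 0 := fun h => hv (h ▸ (A ⊔ W).zero_mem)
    refine ⟨W ⊔ Submodule.span ℂ {v}, ?_, inferInstance, ?_⟩
    · rw [Submodule.disjoint_def]
      intro x hx hxA
      obtain ⟨w, hw, z, hz, rfl⟩ := Submodule.mem_sup.1 hx
      obtain ⟨c, rfl⟩ := Submodule.mem_span_singleton.1 hz
      by_cases hc : c = 0
      · subst hc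
        simpa using (Submodule.disjoint_def.1 hWA) w hw (by simpa using hxA)
      · exfalso
        apply hv
        have : c • v = (w + c • v) - w := by abel
        have hcv : c • v ∈ (A ⊔ W : Submodule ℂ V) := by
          rw [this]
          exact Submodule.sub_mem _ (Submodule.mem_sup_left hxA) (Submodule.mem_sup_right hw)
        have := Submodule.smul_mem _ c⁻¹ hcv
        rwa [smul_smul, inv_mul_cancel₀ hc, one_smul] at this
    · have hvW : v ∉ W := fun h => hv (Submodule.mem_sup_right h)
      have hinf : W ⊓ Submodule.span ℂ {v} = ⊥ := by
        rw [Submodule.eq_bot_iff]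
        intro x ⟨hxW, hxs⟩
        obtain ⟨c, rfl⟩ := Submodule.mem_span_singleton.1 hxs
        by_cases hc : c = 0
        · simp [hc]
        · exfalso
          apply hvW
          have := Submodule.smul_mem _ c⁻¹ hxW
          rwa [smul_smul, inv_mul_cancel₀ hc, one_smul] at this
      have h1 : Module.finrank ℂ (Submodule.span ℂ {v}) = 1 := finrank_span_singleton hv0
      have := Submodule.finrank_sup_add_finrank_inf_eq W (Submodule.span ℂ {v})
      rw [hinf, hWrank, h1] at this
      simpa using this

/-- On an infinite-dimensional complex Hilbert space, every
finite-rank bounded operator is a product of finitely many idempotent finite-rank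
bounded operators. -/
theorem finite_rank_idempotent_generated {H : Type*}
    [NormedAddCommGroup H] [InnerProductSpace ℂ H] [CompleteSpace H]
    (hH : ¬ FiniteDimensional ℂ H)
    (f : H →L[ℂ] H) (hf : FiniteDimensional ℂ (LinearMap.range (f : H →ₗ[ℂ] H))) :
    ∃ l : List (H →L[ℂ] H), l ≠ [] ∧
      (∀ e ∈ l, e.comp e = e ∧ FiniteDimensional ℂ (LinearMap.range (e : H →ₗ[ℂ] H))) ∧
      f = l.prod := by
  classical
  set R : Submodule ℂ H := LinearMap.range (f : H →ₗ[ℂ] H) with hRdef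
  set K : Submodule ℂ H := LinearMap.ker (f : H →ₗ[ℂ] H) with hKdef
  have hKclosed : IsClosed (K : Set H) := ContinuousLinearMap.isClosed_ker f
  haveI : CompleteSpace K := hKclosed.completeSpace_coe
  set M : Submodule ℂ H := Kᗮ with hMdef
  haveI hfR : FiniteDimensional ℂ R := hf
  -- M is finite dimensional since f is injective on M with range inside R
  have hMK : ∀ x : H, x ∈ M → x ∈ K → x = 0 := by
    intro x hxM hxK
    have := (Submodule.mem_orthogonal K x).1 hxM x hxK
    exact inner_self_eq_zero.1 this
  haveI : FiniteDimensional ℂ M := by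
    have hmem : ∀ m : M, (f.toLinearMap.comp M.subtype) m ∈ R := fun m =>
      LinearMap.mem_range_self _ _
    apply FiniteDimensional.of_injective
      (LinearMap.codRestrict R (f.toLinearMap.comp M.subtype) hmem)
    rw [← LinearMap.ker_eq_bot, LinearMap.ker_codRestrict]
    rw [Submodule.eq_bot_iff]
    intro m hm
    have : f m = 0 := hm
    have : (m : H) = 0 := hMK m m.2 this
    exact Subtype.ext this
  have hMbot : Mᗮ = K := Submodule.orthogonal_orthogonal K
  -- K is infinite dimensional
  have hKinf : ¬ FiniteDimensional ℂ K := by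
    intro hKfin
    apply hH
    have hsup : K ⊔ Kᗮ = ⊤ := Submodule.sup_orthogonal_of_hasOrthogonalProjection
    haveI : FiniteDimensional ℂ (K ⊔ Kᗮ : Submodule ℂ H) := inferInstance
    rw [hsup] at this
    exact (Submodule.topEquiv (R := ℂ) (M := H)).finiteDimensional
  -- the bad finite-dimensional subspace D inside K
  set D : Submodule ℂ H := K ⊓ (R ⊔ M) with hDdef
  haveI : FiniteDimensional ℂ (R ⊔ M : Submodule ℂ H) := inferInstance
  haveI hDfin : FiniteDimensional ℂ D :=
    Submodule.finiteDimensional_of_le (inf_le_right : D ≤ R ⊔ M)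
  set A : Submodule ℂ K := D.comap K.subtype with hAdef
  haveI : FiniteDimensional ℂ A := by
    have hle : D ≤ K := inf_le_left
    exact (Submodule.comapSubtypeEquivOfLe hle).symm.finiteDimensional
  obtain ⟨W', hW'A, hW'fin, hW'rank⟩ :=
    aux_exists_disjoint_subspace hKinf A inferInstance (Module.finrank ℂ M)
  set W : Submodule ℂ H := W'.map K.subtype with hWdef
  haveI : FiniteDimensional ℂ W := by
    haveI := hW'fin
    exact Module.Finite.map _ _
  have hWrank : Module.finrank ℂ W = Module.finrank ℂ M := by
    rw [← hW'rank]
    exact (Submodule.equivMapOfInjective K.subtype K.injective_subtype W').symm.finrank_eq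
  have hWK : W ≤ K := Submodule.map_subtype_le _ _
  have hWD : ∀ x : H, x ∈ W → x ∈ D → x = 0 := by
    intro x hxW hxD
    obtain ⟨y, hyW', rfl⟩ := hxW
    have hyA : y ∈ A := hxD
    have := (Submodule.disjoint_def.1 hW'A) y hyW' hyA
    simp [this]
  -- the injective map s : M → W ⊆ K
  haveI := hW'fin
  set σ : M ≃ₗ[ℂ] W := LinearEquiv.ofFinrankEq M W hWrank.symm with hσdef
  set s : M →ₗ[ℂ] H := W.subtype.comp σ.toLinearMap with hsdef
  have hs_mem : ∀ m : M, s m ∈ W := fun m => (σ m).2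
  have hs_inj : Function.Injective s := by
    intro a b hab
    apply σ.injective
    exact Subtype.ext hab
  -- the projection g
  set P : H →L[ℂ] M := orthogonalProjection M with hPdef
  set sc : M →L[ℂ] H := LinearMap.toContinuousLinearMap s with hscdef
  set g : H →L[ℂ] H := M.subtypeL.comp P + sc.comp P with hgdef
  have hg_apply : ∀ v : H, g v = (P v : H) + s (P v) := by
    intro v; simp [hgdef, hscdef]
  set X : Submodule ℂ H := LinearMap.range ((M.subtype : M →ₗ[ℂ] H) + s) with hXdef
  have hX_mem : ∀ x : H, x ∈ X ↔ ∃ m : M, (m : H) + s m = x := by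
    intro x
    constructor
    · rintro ⟨m, rfl⟩; exact ⟨m, rfl⟩
    · rintro ⟨m, rfl⟩; exact ⟨m, rfl⟩
  have hgX : ∀ v : H, g v ∈ X := by
    intro v
    rw [hg_apply, hX_mem]
    exact ⟨P v, rfl⟩
  -- X ∩ R = 0
  have hXR : ∀ x : H, x ∈ X → x ∈ R → x = 0 := by
    intro x hxX hxR
    obtain ⟨m, rfl⟩ := (hX_mem x).1 hxX
    have h1 : s m ∈ K := hWK (hs_mem m)
    have h2 : s m ∈ R ⊔ M := by
      have : s m = ((m : H) + s m) - (m : H) := by abel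
      rw [this]
      exact Submodule.sub_mem _ (Submodule.mem_sup_left hxR) (Submodule.mem_sup_right m.2)
    have h3 : s m ∈ D := ⟨h1, h2⟩
    have h4 : s m = 0 := hWD _ (hs_mem m) h3
    have h5 : m = 0 := hs_inj (by simpa using h4)
    simp [h5, h4]
  haveI : FiniteDimensional ℂ X := by
    apply Submodule.finiteDimensional_of_le (S₂ := M ⊔ W)
    rintro x hx
    obtain ⟨m, rfl⟩ := (hX_mem x).1 hx
    exact Submodule.add_mem _ (Submodule.mem_sup_left m.2) (Submodule.mem_sup_right (hs_mem m))
  set F : Submodule ℂ H := X ⊔ R with hFdef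
  haveI : FiniteDimensional ℂ F := inferInstance
  set C : Submodule ℂ H := Fᗮ with hCdef
  have hXF : X ≤ F := le_sup_left
  have hRF : R ≤ F := le_sup_right
  have hFC : ∀ x : H, x ∈ F → x ∈ C → x = 0 := by
    intro x hxF hxC
    have := (Submodule.mem_orthogonal F x).1 hxC x hxF
    exact inner_self_eq_zero.1 this
  have hFsup : F ⊔ C = ⊤ := Submodule.sup_orthogonal_of_hasOrthogonalProjection
  -- IsCompl X (R ⊔ C)
  have h1 : IsCompl X (R ⊔ C) := by
    constructor
    · rw [Submodule.disjoint_def]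
      intro x hxX hxRC
      obtain ⟨r, hr, c, hc, rfl⟩ := Submodule.mem_sup.1 hxRC
      have hcF : c ∈ F := by
        have : c = (r + c) - r := by abel
        rw [this]
        exact Submodule.sub_mem _ (hXF hxX) (hRF hr)
      have hc0 : c = 0 := hFC c hcF hc
      subst hc0
      rw [add_zero] at hxX ⊢
      exact hXR r hxX hr
    · rw [codisjoint_iff, ← sup_assoc]
      exact hFsup
  have h2 : IsCompl R (X ⊔ C) := by
    constructor
    · rw [Submodule.disjoint_def]
      intro r hrR hrXC
      obtain ⟨x, hx, c, hc, rfl⟩ := Submodule.mem_sup.1 hrXC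
      have hcF : c ∈ F := by
        have : c = (x + c) - x := by abel
        rw [this]
        exact Submodule.sub_mem _ (hRF hrR) (hXF hx)
      have hc0 : c = 0 := hFC c hcF hc
      subst hc0
      rw [add_zero] at hrR ⊢
      exact hXR x hx hrR
    · rw [codisjoint_iff, ← sup_assoc, sup_comm R X]
      exact hFsup
  set πX : H →ₗ[ℂ] X := X.linearProjOfIsCompl (R ⊔ C) h1 with hπXdef
  set πR : H →ₗ[ℂ] R := R.linearProjOfIsCompl (X ⊔ C) h2 with hπRdef
  set E : H →ₗ[ℂ] H :=
    (f.toLinearMap.comp (X.subtype.comp πX)) + (R.subtype.comp πR) with hEdef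
  set e : H →L[ℂ] H :=
    (LinearMap.toContinuousLinearMap (E.comp F.subtype)).comp
      (orthogonalProjection F) with hedef
  have he_apply : ∀ v : H, e v = E ((orthogonalProjection F v : H)) := by
    intro v; simp [hedef]
  have hE_mem : ∀ v : H, E v ∈ R := by
    intro v
    apply Submodule.add_mem
    · exact LinearMap.mem_range_self _ _
    · exact (πR v).2
  have he_mem : ∀ v : H, e v ∈ R := fun v => by rw [he_apply]; exact hE_mem _
  have heX : ∀ x : H, x ∈ X → e x = f x := by
    intro x hx
    rw [he_apply, show ((orthogonalProjection F x : H)) = x from congrArg Subtype.val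
      (Submodule.orthogonalProjectionOnto_mem_subspace_eq_self (K := F) ⟨x, hXF hx⟩)]
    have hπXx : πX x = ⟨x, hx⟩ := X.linearProjOfIsCompl_apply_left h1 ⟨x, hx⟩
    have hπRx : πR x = 0 :=
      R.linearProjOfIsCompl_apply_right h2 ⟨x, Submodule.mem_sup_left hx⟩
    simp [hEdef, hπXx, hπRx]
  have heR : ∀ r : H, r ∈ R → e r = r := by
    intro r hr
    rw [he_apply, show ((orthogonalProjection F r : H)) = r from congrArg Subtype.val
      (Submodule.orthogonalProjectionOnto_mem_subspace_eq_self (K := F) ⟨r, hRF hr⟩)]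
    have hπXr : πX r = 0 :=
      X.linearProjOfIsCompl_apply_right h1 ⟨r, Submodule.mem_sup_left hr⟩
    have hπRr : πR r = ⟨r, hr⟩ := R.linearProjOfIsCompl_apply_left h2 ⟨r, hr⟩
    simp [hEdef, hπXr, hπRr]
  -- e is idempotent
  have he_idem : e.comp e = e := by
    ext v
    exact heR (e v) (he_mem v)
  have he_fin : FiniteDimensional ℂ (LinearMap.range (e : H →ₗ[ℂ] H)) := by
    apply Submodule.finiteDimensional_of_le (S₂ := R)
    rintro _ ⟨v, rfl⟩
    exact he_mem v
  -- g is idempotent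
  have hsK : ∀ m : M, s m ∈ K := fun m => hWK (hs_mem m)
  have hPM : ∀ m : M, P (m : H) = m := fun m =>
    orthogonalProjection_mem_subspace_eq_self m
  have hPK : ∀ x : H, x ∈ K → P x = 0 := by
    intro x hx
    apply Submodule.orthogonalProjectionOnto_apply_of_mem_orthogonal
    rw [hMbot]
    exact hx
  have hg_idem : g.comp g = g := by
    ext v
    show g (g v) = g v
    rw [hg_apply v, hg_apply]
    have : P ((P v : H) + s (P v)) = P v := by
      rw [map_add, hPM, hPK _ (hsK (P v)), add_zero]
    rw [this]
  have hg_fin : FiniteDimensional ℂ (LinearMap.range (g : H →ₗ[ℂ] H)) := by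
    apply Submodule.finiteDimensional_of_le (S₂ := M ⊔ W)
    rintro _ ⟨v, rfl⟩
    rw [ContinuousLinearMap.coe_coe, hg_apply]
    exact Submodule.add_mem _ (Submodule.mem_sup_left (P v).2)
      (Submodule.mem_sup_right (hs_mem (P v)))
  -- f = e * g
  have hfg : f = e * g := by
    ext v
    rw [ContinuousLinearMap.mul_apply]
    rw [heX _ (hgX v), hg_apply]
    have h1 : f (s (P v)) = 0 := hsK (P v)
    have h2 : f (v - (P v : H)) = 0 := by
      have : v - (P v : H) ∈ Mᗮ := Submodule.sub_starProjection_mem_orthogonal (K := M) v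
      rw [hMbot] at this
      exact this
    have h3 : f v = f ((P v : H)) := by
      have h4 : f v - f ((P v : H)) = 0 := by rw [← map_sub]; exact h2
      exact sub_eq_zero.1 h4
    rw [map_add, h1, add_zero, h3]
  refine ⟨[e, g], by simp, ?_, ?_⟩
  · intro x hx
    simp only [List.mem_cons, List.mem_singleton, List.not_mem_nil, or_false] at hx
    rcases hx with rfl | rfl
    · exact ⟨he_idem, he_fin⟩
    · exact ⟨hg_idem, hg_fin⟩
  · rw [hfg]
    simp [List.prod_cons]
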